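/- arXiv:1912.05363 — 3 statements merged into one kernel-verified Lean document; each statement's English description precedes it below -/
import Mathlib

section
/- The subring of R_W generated by π^*(R_X) ∪ j_*(R_E) equals the subring of R_W generated by π^*(R_X) ∪ j_*(π_E^*(R_Z)). -/
/-- With the blow-up multiplication rule and `R_E` generated as a ring by
`π_E^*(R_Z)` together with `ζ`, the subring of `R_W` generated by `π^*(R_X) ∪ j_*(R_E)`
equals the subring generated by `π^*(R_X) ∪ j_*(π_E^*(R_Z))`. -/
theorem subring_gen_without_zeta
    {R_X R_Z R_E R_W : Type*} [CommRing R_X] [CommRing R_Z] [CommRing R_E] [CommRing R_W]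
    (π : R_X →+* R_W) (πE : R_Z →+* R_E) (j : R_E →+ R_W) (ζ : R_E)
    (hrule : ∀ γ δ : R_E, j γ * j δ = -j (γ * δ * ζ))
    (hgenE : Subring.closure (Set.range πE ∪ {ζ}) = (⊤ : Subring R_E)) :
    Subring.closure (Set.range π ∪ Set.range j) =
      Subring.closure (Set.range π ∪ Set.range (fun z : R_Z => j (πE z))) := by
  set S := Subring.closure (Set.range π ∪ Set.range (fun z : R_Z => j (πE z))) with hS
  have hrule' : ∀ γ δ : R_E, j (γ * δ * ζ) = -(j γ * j δ) := by
    intro γ δ; rw [hrule, neg_neg]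
  have hjz : ∀ c : R_Z, j (πE c) ∈ S := fun c =>
    Subring.subset_closure (Or.inr ⟨c, rfl⟩)
  -- key structural lemma
  have key : ∀ e : R_E, ∃ z a', e = πE z + a' * ζ ∧ (∀ c : R_Z, j (πE c * a') ∈ S) := by
    intro e
    have he : e ∈ Subring.closure (Set.range πE ∪ {ζ}) := by
      rw [hgenE]; exact Subring.mem_top e
    induction he using Subring.closure_induction with
    | mem x hx =>
      rcases hx with ⟨z, rfl⟩ | hx
      · exact ⟨z, 0, by ring, fun c => by simpa using S.zero_mem⟩
      · rcases hx with rfl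
        exact ⟨0, 1, by simp, fun c => by simpa using hjz c⟩
    | zero => exact ⟨0, 0, by simp, fun c => by simpa using S.zero_mem⟩
    | one => exact ⟨1, 0, by simp, fun c => by simpa using S.zero_mem⟩
    | add x y hx hy px py =>
      obtain ⟨z₁, a₁, rfl, h₁⟩ := px
      obtain ⟨z₂, a₂, rfl, h₂⟩ := py
      refine ⟨z₁ + z₂, a₁ + a₂, by rw [map_add]; ring, fun c => ?_⟩
      have : πE c * (a₁ + a₂) = πE c * a₁ + πE c * a₂ := by ring
      rw [this, map_add]
      exact S.add_mem (h₁ c) (h₂ c)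
    | neg x hx px =>
      obtain ⟨z, a, rfl, h⟩ := px
      refine ⟨-z, -a, by rw [map_neg]; ring, fun c => ?_⟩
      have : πE c * (-a) = -(πE c * a) := by ring
      rw [this, map_neg]
      exact S.neg_mem (h c)
    | mul x y hx hy px py =>
      obtain ⟨z₁, a₁, rfl, h₁⟩ := px
      obtain ⟨z₂, a₂, rfl, h₂⟩ := py
      refine ⟨z₁ * z₂, πE z₁ * a₂ + πE z₂ * a₁ + a₁ * a₂ * ζ,
        by rw [map_mul]; ring, fun c => ?_⟩
      have hexp : πE c * (πE z₁ * a₂ + πE z₂ * a₁ + a₁ * a₂ * ζ) =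
          πE (c * z₁) * a₂ + πE (c * z₂) * a₁ + (πE c * a₁) * a₂ * ζ := by
        rw [map_mul, map_mul]; ring
      rw [hexp, map_add, map_add, hrule']
      have ha₂ : j a₂ ∈ S := by simpa using h₂ 1
      exact S.add_mem (S.add_mem (h₂ (c * z₁)) (h₁ (c * z₂)))
        (S.neg_mem (S.mul_mem (h₁ c) ha₂))
  apply le_antisymm
  · rw [Subring.closure_le]
    rintro w (⟨x, rfl⟩ | ⟨e, rfl⟩)
    · exact Subring.subset_closure (Or.inl ⟨x, rfl⟩)
    · obtain ⟨z, a, rfl, h⟩ := key e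
      have ha : j a ∈ S := by simpa using h 1
      have haζ : j (a * ζ) = -(j a * j 1) := by
        have := hrule' a 1; rwa [mul_one] at this
      rw [map_add, haζ]
      have h1 : j (1 : R_E) ∈ S := by simpa using hjz 1
      exact S.add_mem (hjz z) (S.neg_mem (S.mul_mem ha h1))
  · apply Subring.closure_mono
    rintro w (⟨x, rfl⟩ | ⟨z, rfl⟩)
    · exact Or.inl ⟨x, rfl⟩
    · exact Or.inr ⟨πE z, rfl⟩
end

section
/- The subring of R_W generated by π^*(R_X) ∪ j_*(R_E) equals the subring of R_W generated by π^*(R_X) ∪ {j_*(π_E^*(z)) : z ∈ 𝒵}. -/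
/-- With the blow-up multiplication rule, the compatibility rule
`π^*(α)·j_*(γ) = j_*(π_E^*(i^*(α))·γ)`, `R_E` generated as a ring by `π_E^*(R_Z)` and `ζ`,
and `𝒵 ⊆ R_Z` such that every element of `R_Z` is a finite sum of elements `i^*(x)·z`
with `x ∈ R_X`, `z ∈ 𝒵`, the subring of `R_W` generated by `π^*(R_X) ∪ j_*(R_E)` equals
the subring generated by `π^*(R_X) ∪ {j_*(π_E^*(z)) : z ∈ 𝒵}`. -/
theorem subring_gen_economical
    {R_X R_Z R_E R_W : Type*} [CommRing R_X] [CommRing R_Z] [CommRing R_E] [CommRing R_W]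
    (π : R_X →+* R_W) (πE : R_Z →+* R_E) (i : R_X →+* R_Z)
    (j : R_E →+ R_W) (ζ : R_E)
    (hrule : ∀ γ δ : R_E, j γ * j δ = -j (γ * δ * ζ))
    (hcompat : ∀ (α : R_X) (γ : R_E), π α * j γ = j (πE (i α) * γ))
    (hgenE : Subring.closure (Set.range πE ∪ {ζ}) = (⊤ : Subring R_E))
    (𝒵 : Set R_Z)
    (hgenZ : ∀ y : R_Z,
      y ∈ AddSubmonoid.closure {w : R_Z | ∃ x : R_X, ∃ z ∈ 𝒵, w = i x * z}) :
    Subring.closure (Set.range π ∪ Set.range j) =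
      Subring.closure (Set.range π ∪ (fun z : R_Z => j (πE z)) '' 𝒵) := by
  set S := Subring.closure (Set.range π ∪ (fun z : R_Z => j (πE z)) '' 𝒵) with hS
  -- Step 1: `j (πE y) ∈ S` for all `y`.
  have step1 : ∀ y : R_Z, j (πE y) ∈ S := by
    intro y
    have hy := hgenZ y
    induction hy using AddSubmonoid.closure_induction with
    | mem w hw =>
      obtain ⟨x, z, hz, rfl⟩ := hw
      have : j (πE (i x * z)) = π x * j (πE z) := by
        rw [map_mul, hcompat]
      rw [this]
      exact mul_mem (Subring.subset_closure (Or.inl ⟨x, rfl⟩))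
        (Subring.subset_closure (Or.inr ⟨z, hz, rfl⟩))
    | zero => simpa using zero_mem _
    | add a b _ _ ha hb =>
      rw [map_add, map_add]; exact add_mem ha hb
  -- Step 2: `j (πE y * ζ ^ m) ∈ S` for all `y`, `m`.
  have step2 : ∀ (m : ℕ) (y : R_Z), j (πE y * ζ ^ m) ∈ S := by
    intro m
    induction m with
    | zero => intro y; simpa using step1 y
    | succ m ih =>
      intro y
      have h1 : j (πE y * ζ ^ m) * j 1 = -j (πE y * ζ ^ (m + 1)) := by
        rw [hrule]
        ring_nf
      have : j (πE y * ζ ^ (m + 1)) = -(j (πE y * ζ ^ m) * j 1) := by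
        rw [h1, neg_neg]
      rw [this]
      have h2 : j (1 : R_E) ∈ S := by simpa using step1 1
      exact neg_mem (mul_mem (ih y) h2)
  -- The additive subgroup generated by `πE y * ζ ^ m` is all of `R_E`.
  set G : Set R_E := {e : R_E | ∃ y : R_Z, ∃ m : ℕ, e = πE y * ζ ^ m} with hG
  have hmulG : ∀ a ∈ AddSubgroup.closure G, ∀ b ∈ AddSubgroup.closure G,
      a * b ∈ AddSubgroup.closure G := by
    intro a ha b hb
    induction ha using AddSubgroup.closure_induction with
    | mem a' ha' =>
      induction hb using AddSubgroup.closure_induction with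
      | mem b' hb' =>
        obtain ⟨y, m, rfl⟩ := ha'
        obtain ⟨y', m', rfl⟩ := hb'
        refine AddSubgroup.subset_closure ⟨y * y', m + m', ?_⟩
        rw [map_mul, pow_add]; ring
      | zero => simpa using zero_mem _
      | add x y _ _ hx hy => rw [mul_add]; exact add_mem hx hy
      | neg x _ hx => rw [mul_neg]; exact neg_mem hx
    | zero => simpa using zero_mem _
    | add x y _ _ hx hy => rw [add_mul]; exact add_mem hx hy
    | neg x _ hx => rw [neg_mul]; exact neg_mem hx
  have hA : ∀ e : R_E, e ∈ AddSubgroup.closure G := by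
    intro e
    let A : Subring R_E :=
      { carrier := AddSubgroup.closure G
        zero_mem' := zero_mem _
        add_mem' := fun ha hb => add_mem ha hb
        neg_mem' := fun ha => neg_mem ha
        one_mem' := AddSubgroup.subset_closure ⟨1, 0, by simp⟩
        mul_mem' := fun ha hb => hmulG _ ha _ hb }
    have : Subring.closure (Set.range πE ∪ {ζ}) ≤ A := by
      apply Subring.closure_le.2
      rintro x (⟨y, rfl⟩ | hx)
      · exact AddSubgroup.subset_closure ⟨y, 0, by simp⟩
      · rcases hx with rfl
        exact AddSubgroup.subset_closure ⟨1, 1, by simp⟩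
    have he : e ∈ A := this (hgenE ▸ Subring.mem_top e)
    exact he
  -- Step 3: `j γ ∈ S` for all `γ`.
  have step3 : ∀ γ : R_E, j γ ∈ S := by
    intro γ
    have hγ := hA γ
    induction hγ using AddSubgroup.closure_induction with
    | mem e he => obtain ⟨y, m, rfl⟩ := he; exact step2 m y
    | zero => simpa using zero_mem _
    | add a b _ _ ha hb => rw [map_add]; exact add_mem ha hb
    | neg a _ ha => rw [map_neg]; exact neg_mem ha
  -- Conclude.
  apply le_antisymm
  · apply Subring.closure_le.2
    rintro w (⟨x, rfl⟩ | ⟨γ, rfl⟩)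
    · exact Subring.subset_closure (Or.inl ⟨x, rfl⟩)
    · exact step3 γ
  · apply Subring.closure_mono
    rintro w (hw | ⟨z, hz, rfl⟩)
    · exact Or.inl hw
    · exact Or.inr ⟨πE z, rfl⟩
end

section
/- The saturation of L in ℤⁿ equals L + ℤ·w; that is, the saturated lattice is generated by v₁,…,v_k together with w = (v₁+⋯+v_k)/2, and L has index 2 in its saturation. -/
open Matrix Finset in
private lemma aux_det_updateColumn_sum {k : ℕ} (A : Matrix (Fin k) (Fin k) ℤ) (i : Fin k)
    (t : Finset (Fin k)) (hi : i ∉ t) (c : Fin k → ℤ) :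
    det (A.updateCol i (c + ∑ j ∈ t, fun r => A r j)) = det (A.updateCol i c) := by
  induction t using Finset.induction with
  | empty => simp
  | @insert j t hjt ih =>
    have h1 : c + ∑ x ∈ insert j t, (fun r => A r x)
        = (c + ∑ x ∈ t, fun r => A r x) + fun r => A r j := by
      rw [Finset.sum_insert hjt]; abel
    have hji : j ≠ i := fun h => hi (h ▸ Finset.mem_insert_self j t)
    rw [h1, det_updateCol_add, ih (fun h => hi (Finset.mem_insert_of_mem h)),
      Matrix.det_updateCol_eq_zero hji, add_zero]

open Matrix Finset in
private lemma aux_four_dvd {n k : ℕ} (v : Fin k → Fin n → ℤ) (y z : Fin n → ℤ)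
    (T : Finset (Fin k)) (i₀ i₁ : Fin k) (h0 : i₀ ∈ T) (h1 : i₁ ∉ T)
    (hT : ∑ i ∈ T, v i = (2:ℤ) • y) (hTc : ∑ i ∈ Tᶜ, v i = (2:ℤ) • z) (s : Fin k ↪ Fin n) :
    (4 : ℤ) ∣ (Matrix.of fun i j : Fin k => v j (s i)).det := by
  set A : Matrix (Fin k) (Fin k) ℤ := Matrix.of fun i j : Fin k => v j (s i) with hA
  have hne : i₁ ≠ i₀ := fun h => h1 (h ▸ h0)
  have e0 : (2 : ℤ) • (fun r => y (s r)) = (fun r => A r i₀) + ∑ j ∈ T.erase i₀, fun r => A r j := by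
    funext r
    have h := congrFun hT (s r)
    simp only [Finset.sum_apply, Pi.smul_apply, smul_eq_mul] at h
    rw [← Finset.add_sum_erase _ (fun j => v j (s r)) h0] at h
    simp only [Pi.smul_apply, Pi.add_apply, Finset.sum_apply, smul_eq_mul, hA, Matrix.of_apply]
    exact h.symm
  have hd0 : det (A.updateCol i₀ ((2:ℤ) • fun r => y (s r))) = det A := by
    rw [e0, aux_det_updateColumn_sum A i₀ (T.erase i₀) (Finset.notMem_erase _ _),
      Matrix.updateCol_eq_self]
  set B : Matrix (Fin k) (Fin k) ℤ := A.updateCol i₀ (fun r => y (s r)) with hB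
  have e1 : (2 : ℤ) • (fun r => z (s r)) = (fun r => B r i₁) + ∑ j ∈ Tᶜ.erase i₁, fun r => B r j := by
    funext r
    have h := congrFun hTc (s r)
    simp only [Finset.sum_apply, Pi.smul_apply, smul_eq_mul] at h
    rw [← Finset.add_sum_erase _ (fun j => v j (s r)) (Finset.mem_compl.mpr h1)] at h
    simp only [Pi.smul_apply, Pi.add_apply, Finset.sum_apply, smul_eq_mul]
    have hBc : ∀ j ∈ Tᶜ, B r j = v j (s r) := by
      intro j hj
      have : j ≠ i₀ := fun hji => (Finset.mem_compl.mp hj) (hji ▸ h0)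
      simp [hB, Matrix.updateCol_ne this, hA]
    rw [hBc i₁ (Finset.mem_compl.mpr h1),
      Finset.sum_congr rfl (fun j hj => hBc j (Finset.mem_of_mem_erase hj))]
    exact h.symm
  have hd1 : det (B.updateCol i₁ ((2:ℤ) • fun r => z (s r))) = det B := by
    rw [e1, aux_det_updateColumn_sum B i₁ (Tᶜ.erase i₁) (Finset.notMem_erase _ _),
      Matrix.updateCol_eq_self]
  have : det A = 4 * det (B.updateCol i₁ (fun r => z (s r))) := by
    rw [← hd0, Matrix.det_updateCol_smul, ← hd1, Matrix.det_updateCol_smul]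
    ring
  exact ⟨_, this⟩

open Matrix Finset in
private lemma aux_cramer {n k : ℕ} (v : Fin k → Fin n → ℤ) (x : Fin n → ℤ) (m : ℤ)
    (a : Fin k → ℤ) (h : ∑ i, a i • v i = m • x) (s : Fin k ↪ Fin n) (i : Fin k) :
    m ∣ (Matrix.of fun i j : Fin k => v j (s i)).det * a i := by
  set A : Matrix (Fin k) (Fin k) ℤ := Matrix.of fun i j : Fin k => v j (s i) with hA
  have hmv : A.mulVec a = m • fun r => x (s r) := by
    funext r
    have h' := congrFun h (s r)
    simp only [Finset.sum_apply, Pi.smul_apply, smul_eq_mul] at h'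
    simp only [Matrix.mulVec, dotProduct, hA, Matrix.of_apply, Pi.smul_apply, smul_eq_mul]
    rw [← h']
    exact Finset.sum_congr rfl fun j _ => mul_comm _ _
  have key : A.det • a = m • (A.adjugate.mulVec fun r => x (s r)) := by
    rw [← Matrix.mulVec_smul, ← hmv, Matrix.mulVec_mulVec, Matrix.adjugate_mul,
      Matrix.smul_mulVec, Matrix.one_mulVec]
  have := congrFun key i
  simp only [Pi.smul_apply, smul_eq_mul] at this
  exact ⟨_, this⟩

open Finset in
private lemma aux_bezout {n k : ℕ} (v : Fin k → Fin n → ℤ)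
    (hgcd : ∀ d : ℤ,
      (∀ s : Fin k ↪ Fin n, d ∣ (Matrix.of fun i j : Fin k => v j (s i)).det) ↔ d ∣ 2) :
    ∃ c : (Fin k ↪ Fin n) → ℤ,
      ∑ s : Fin k ↪ Fin n, c s * (Matrix.of fun i j : Fin k => v j (s i)).det = 2 := by
  set D : (Fin k ↪ Fin n) → ℤ := fun s => (Matrix.of fun i j : Fin k => v j (s i)).det with hD
  have h2 : (2 : ℤ) ∈ Ideal.span (Set.range D) := by
    obtain ⟨g, hg⟩ := (Ideal.span (Set.range D)).isPrincipal_iff.mp inferInstance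
    have hgdvd : ∀ s, g ∣ D s := by
      intro s
      have hmem : D s ∈ Submodule.span ℤ {g} := hg ▸ Ideal.subset_span (Set.mem_range_self s)
      exact Ideal.mem_span_singleton.mp hmem
    have hg2 : g ∣ 2 := (hgcd g).mp hgdvd
    rw [hg]
    exact Ideal.mem_span_singleton.mpr hg2
  rw [Ideal.span, Finsupp.mem_span_range_iff_exists_finsupp] at h2
  obtain ⟨c, hc⟩ := h2
  refine ⟨c, ?_⟩
  rw [← hc, Finsupp.sum_fintype]
  · exact Finset.sum_congr rfl fun s _ => rfl
  · intro s; exact zero_smul _ _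

/-- Let `v₁,…,v_k ∈ ℤⁿ` be linearly independent over `ℚ`, let `L` be their
ℤ-span, assume the gcd of all `k×k` minors of the matrix with columns `v₁,…,v_k` is `2`,
and that `w := (v₁+⋯+v_k)/2 ∈ ℤⁿ`. Then the saturation of `L` in `ℤⁿ`
(`{x : ∃ m ≥ 1, m·x ∈ L}`) equals `L + ℤ·w`, and `L` has index `2` in its saturation. -/
theorem saturation_eq_span_with_half_sum
    (n k : ℕ) (hk : k ≤ n) (v : Fin k → (Fin n → ℤ))
    (hli : LinearIndependent ℚ (fun i : Fin k => fun j : Fin n => ((v i j : ℚ))))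
    (hgcd : ∀ d : ℤ,
      (∀ s : Fin k ↪ Fin n, d ∣ (Matrix.of fun i j : Fin k => v j (s i)).det) ↔ d ∣ 2)
    (w : Fin n → ℤ) (hw : 2 • w = ∑ i, v i)
    (L : Submodule ℤ (Fin n → ℤ)) (hL : L = Submodule.span ℤ (Set.range v)) :
    {x : Fin n → ℤ | ∃ m : ℤ, 1 ≤ m ∧ m • x ∈ L} =
        ↑(L ⊔ Submodule.span ℤ {w}) ∧
      L.toAddSubgroup.relIndex (L ⊔ Submodule.span ℤ {w}).toAddSubgroup = 2 := by
  subst hL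
  set L := Submodule.span ℤ (Set.range v) with hLdef
  have hwZ : (2:ℤ) • w = ∑ i, v i := by
    rw [show ((2:ℤ) • w) = w + w from two_smul ℤ w, ← two_smul ℕ w, hw]
  -- k ≠ 0
  have hk0 : k ≠ 0 := by
    intro h
    subst h
    have h2 := (hgcd 2).mpr dvd_rfl (Function.Embedding.ofIsEmpty)
    rw [Matrix.det_fin_zero] at h2
    norm_num at h2
  have : Nonempty (Fin k) := ⟨⟨0, Nat.pos_of_ne_zero hk0⟩⟩
  -- w ∉ L
  have hwL : w ∉ L := by
    intro hmem
    rw [hLdef, Submodule.mem_span_range_iff_exists_fun ℤ] at hmem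
    obtain ⟨c, hc⟩ := hmem
    have hrel : ∑ i, ((2 * c i - 1 : ℤ)) • v i = 0 := by
      have h1 : ∑ i, (2 * c i) • v i = (2:ℤ) • w := by
        rw [← hc, Finset.smul_sum]
        exact Finset.sum_congr rfl fun i _ => (smul_smul 2 (c i) (v i)).symm
      calc ∑ i, ((2 * c i - 1 : ℤ)) • v i
          = ∑ i, ((2 * c i) • v i) - ∑ i, v i := by
            rw [← Finset.sum_sub_distrib]
            exact Finset.sum_congr rfl fun i _ => by rw [sub_smul, one_smul]
        _ = 0 := by rw [h1, hwZ, sub_self]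
    have hQ := Fintype.linearIndependent_iff.mp hli (fun i => ((2 * c i - 1 : ℤ) : ℚ))
    have hQ0 : ∀ i, ((2 * c i - 1 : ℤ) : ℚ) = 0 := by
      apply hQ
      funext j
      have := congrFun hrel j
      simp only [Finset.sum_apply, Pi.smul_apply, smul_eq_mul, Pi.zero_apply] at this ⊢
      exact_mod_cast congrArg (fun t : ℤ => (t : ℚ)) this
    have := hQ0 (Classical.arbitrary (Fin k))
    rw [Int.cast_eq_zero] at this
    omega
  have hwK : w ∈ L ⊔ Submodule.span ℤ ({w} : Set (Fin n → ℤ)) :=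
    Submodule.mem_sup_right (Submodule.mem_span_singleton_self w)
  have hsumL : ∑ i, v i ∈ L :=
    Submodule.sum_mem _ fun i _ => Submodule.subset_span (Set.mem_range_self i)
  -- every element of L ⊔ ℤw is in L or w + L
  have hsplit : ∀ x ∈ L ⊔ Submodule.span ℤ ({w} : Set (Fin n → ℤ)), x ∈ L ∨ x + w ∈ L := by
    intro x hx
    rw [Submodule.mem_sup] at hx
    obtain ⟨l, hl, r, hr, rfl⟩ := hx
    rw [Submodule.mem_span_singleton] at hr
    obtain ⟨c, rfl⟩ := hr
    rcases Int.even_or_odd c with ⟨d, hd⟩ | ⟨d, hd⟩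
    · left
      have : c • w = d • ((2:ℤ) • w) := by rw [smul_smul]; congr 1; omega
      rw [this, hwZ]
      exact Submodule.add_mem _ hl (Submodule.smul_mem _ _ hsumL)
    · right
      have h1 : c • w + w = (d + 1) • ((2:ℤ) • w) := by
        rw [smul_smul, show (d + 1) * 2 = c + 1 from by omega, add_smul, one_smul]
      rw [add_assoc, h1, hwZ]
      exact Submodule.add_mem _ hl (Submodule.smul_mem _ _ hsumL)
  constructor
  · -- saturation = L ⊔ ℤw
    apply Set.eq_of_subset_of_subset
    · -- hard direction
      rintro x ⟨m, hm1, hmx⟩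
      have hm0 : m ≠ 0 := by omega
      rw [hLdef, Submodule.mem_span_range_iff_exists_fun ℤ] at hmx
      obtain ⟨a, ha⟩ := hmx
      -- m ∣ 2 * a i
      have hdvd : ∀ i, m ∣ 2 * a i := by
        intro i
        obtain ⟨c, hc⟩ := aux_bezout v hgcd
        have h1 : 2 * a i = ∑ s : Fin k ↪ Fin n,
            c s * ((Matrix.of fun i j : Fin k => v j (s i)).det * a i) := by
          rw [show (∑ s : Fin k ↪ Fin n,
              c s * ((Matrix.of fun i j : Fin k => v j (s i)).det * a i))
            = (∑ s : Fin k ↪ Fin n,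
              c s * (Matrix.of fun i j : Fin k => v j (s i)).det) * a i from by
              rw [Finset.sum_mul]; exact Finset.sum_congr rfl fun s _ => by ring, hc]
        rw [h1]
        exact Finset.dvd_sum fun s _ => (aux_cramer v x m a ha s i).mul_left (c s)
      set b : Fin k → ℤ := fun i => 2 * a i / m with hb
      have hbm : ∀ i, m * b i = 2 * a i := fun i => Int.mul_ediv_cancel' (hdvd i)
      have h2x : (2:ℤ) • x = ∑ i, b i • v i := by
        apply smul_right_injective (Fin n → ℤ) hm0
        have h1 : ∑ i, (m * b i) • v i = (m * 2) • x := by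
          calc ∑ i, (m * b i) • v i = ∑ i, (2 * a i) • v i :=
                Finset.sum_congr rfl fun i _ => by rw [hbm i]
            _ = (2:ℤ) • ∑ i, a i • v i := by
                rw [Finset.smul_sum]
                exact Finset.sum_congr rfl fun i _ => (smul_smul 2 (a i) (v i)).symm
            _ = (2:ℤ) • (m • x) := by rw [ha]
            _ = (m * 2) • x := by rw [smul_smul]; ring_nf
        show m • ((2:ℤ) • x) = m • ∑ i, b i • v i
        rw [smul_smul, ← h1, Finset.smul_sum]
        exact Finset.sum_congr rfl fun i _ => (smul_smul m (b i) (v i)).symm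
      set q : Fin k → ℤ := fun i => b i / 2 with hq
      set T : Finset (Fin k) := Finset.univ.filter (fun i => b i % 2 = 1) with hT
      set y : Fin n → ℤ := x - ∑ i, q i • v i with hy
      have hyT : (2:ℤ) • y = ∑ i ∈ T, v i := by
        have h1 : (2:ℤ) • y = ∑ i, (b i - 2 * q i) • v i := by
          rw [hy, smul_sub, h2x, Finset.smul_sum, ← Finset.sum_sub_distrib]
          refine Finset.sum_congr rfl fun i _ => ?_
          rw [smul_smul, ← sub_smul]
        rw [h1]
        rw [← Finset.sum_filter_add_sum_filter_not Finset.univ (fun i => b i % 2 = 1)]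
        have h2 : ∑ i ∈ Finset.univ.filter (fun i => b i % 2 = 1), (b i - 2 * q i) • v i
            = ∑ i ∈ T, v i := by
          refine Finset.sum_congr rfl fun i hi => ?_
          rw [Finset.mem_filter] at hi
          have : b i - 2 * q i = 1 := by
            have hqi : q i = b i / 2 := rfl
            omega
          rw [this, one_smul]
        have h3 : ∑ i ∈ Finset.univ.filter (fun i => ¬ b i % 2 = 1), (b i - 2 * q i) • v i
            = 0 := by
          refine Finset.sum_eq_zero fun i hi => ?_
          rw [Finset.mem_filter] at hi
          have : b i - 2 * q i = 0 := by
            have hqi : q i = b i / 2 := rfl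
            have h5 := Int.emod_two_eq (b i)
            rcases h5 with h5 | h5
            · omega
            · exact absurd h5 hi.2
          rw [this, zero_smul]
        rw [h2, h3, add_zero]
      have hxl : x = y + ∑ i, q i • v i := by rw [hy]; abel
      have hqL : ∑ i, q i • v i ∈ L :=
        Submodule.sum_mem _ fun i _ =>
          Submodule.smul_mem _ _ (Submodule.subset_span (Set.mem_range_self i))
      by_cases hTe : T = ∅
      · -- all even : x ∈ L
        have : (2:ℤ) • y = 0 := by rw [hyT, hTe, Finset.sum_empty]
        have hy0 : y = 0 := by
          apply smul_right_injective (Fin n → ℤ) (two_ne_zero (α := ℤ))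
          simpa using this
        have : x ∈ L := by rw [hxl, hy0, zero_add]; exact hqL
        exact Submodule.mem_sup_left this
      · by_cases hTu : T = Finset.univ
        · -- all odd : x ∈ L + w
          have : (2:ℤ) • y = (2:ℤ) • w := by rw [hyT, hTu, hwZ]
          have hyw : y = w := smul_right_injective (Fin n → ℤ) (two_ne_zero (α := ℤ)) this
          show x ∈ (L ⊔ Submodule.span ℤ ({w} : Set (Fin n → ℤ)) : Submodule ℤ (Fin n → ℤ))
          rw [hxl, hyw]
          exact Submodule.add_mem _ hwK (Submodule.mem_sup_left hqL)
        · -- mixed parity : contradiction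
          exfalso
          obtain ⟨i₀, hi₀⟩ := Finset.nonempty_iff_ne_empty.mpr hTe
          obtain ⟨i₁, hi₁⟩ : ∃ i, i ∉ T := by
            by_contra h
            push_neg at h
            exact hTu (Finset.eq_univ_iff_forall.mpr h)
          have hTc : ∑ i ∈ Tᶜ, v i = (2:ℤ) • (w - y) := by
            have h1 : ∑ i ∈ T, v i + ∑ i ∈ Tᶜ, v i = ∑ i, v i :=
              Finset.sum_add_sum_compl T v
            rw [smul_sub, eq_sub_iff_add_eq, hyT, hwZ]
            exact (add_comm _ _).trans h1
          have h4 := (hgcd 4).mp (fun s => aux_four_dvd v y (w - y) T i₀ i₁ hi₀ hi₁ hyT.symm hTc s)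
          norm_num at h4
    · -- easy direction
      intro x hx
      refine ⟨2, one_le_two, ?_⟩
      rcases hsplit x hx with h | h
      · exact Submodule.smul_mem _ _ h
      · have : (2:ℤ) • x = (2:ℤ) • (x + w) - ((2:ℤ) • w) := by
          rw [smul_add]; abel
        rw [this, hwZ]
        exact Submodule.sub_mem _ (Submodule.smul_mem _ _ h) hsumL
  · -- relindex = 2
    rw [AddSubgroup.relIndex]
    rw [AddSubgroup.index_eq_two_iff]
    refine ⟨⟨w, hwK⟩, fun b => ?_⟩
    obtain ⟨x, hx⟩ := b
    by_cases hxL : x ∈ L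
    · refine Or.inr ⟨?_, ?_⟩
      · exact hxL
      · intro hcon
        rw [AddSubgroup.mem_addSubgroupOf] at hcon
        have : x + w ∈ L := hcon
        exact hwL (by simpa using Submodule.sub_mem _ this hxL)
    · refine Or.inl ⟨?_, ?_⟩
      · rw [AddSubgroup.mem_addSubgroupOf]
        rcases hsplit x hx with h | h
        · exact absurd h hxL
        · exact h
      · intro hcon
        rw [AddSubgroup.mem_addSubgroupOf] at hcon
        exact hxL hcon
end
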